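/- Let C : [0,1] → ℝ be continuously differentiable, let l ∈ (0, 1/4), r = 1 − 2l, c = l·r², and let λ and M be as defined. Suppose f, g, h : [0,1] → ℝ satisfy f(x) + g(y) + h(z) ≤ C(x·y·z) for all (x,y,z) ∈ [0,1]³, with equality for all (x,y,z) ∈ M. Then f, g, h are differentiable on [0,1] with continuous derivatives, and f'(x) = λ(x)·C'(x·λ(x)), g'(y) = λ(y)·C'(y·λ(y)), h'(z) = λ(z)·C'(z·λ(z)) for all x, y, z ∈ [0,1]. -/

import Mathlib

open Set Filter Topology

/-- The piecewise function `λ`: `(1−2x)²` on `[0, l)`, `c/x` on `[l, r)` and `x(1−x)/2` on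
`[r, 1]`, where `r = 1 − 2l` and `c = l·r²`. -/
noncomputable def lam (l : ℝ) (x : ℝ) : ℝ :=
  if x < l then (1 - 2*x)^2
  else if x < 1 - 2*l then (l * (1 - 2*l)^2) / x
  else x * (1 - x) / 2

/-- The set `M ⊆ [0,1]³`: the union of the three segments
`Mx = {(t, 1−2t, 1−2t) : 0 ≤ t ≤ l}`, `My = {(1−2t, t, 1−2t) : 0 ≤ t ≤ l}`,
`Mz = {(1−2t, 1−2t, t) : 0 ≤ t ≤ l}` and the two-dimensional piece
`M₂ = {(x,y,z) : l ≤ x,y,z ≤ 1−2l, xyz = l(1−2l)²}`. -/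
def Mset (l : ℝ) : Set (ℝ × ℝ × ℝ) :=
  {p | ∃ t, 0 ≤ t ∧ t ≤ l ∧
    (p = (t, 1 - 2*t, 1 - 2*t) ∨ p = (1 - 2*t, t, 1 - 2*t) ∨ p = (1 - 2*t, 1 - 2*t, t))} ∪
  {p | l ≤ p.1 ∧ p.1 ≤ 1 - 2*l ∧ l ≤ p.2.1 ∧ p.2.1 ≤ 1 - 2*l ∧ l ≤ p.2.2 ∧ p.2.2 ≤ 1 - 2*l ∧
    p.1 * p.2.1 * p.2.2 = l * (1 - 2*l)^2}



lemma lam_eq_left {l x : ℝ} (hl : l ∈ Ioo (0:ℝ) (1/4)) (hx : x ∈ Icc (0:ℝ) l) :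
    lam l x = (1 - 2*x)^2 := by
  obtain ⟨hl0, hl4⟩ := hl
  unfold lam
  split_ifs with h1 h2
  · rfl
  · have : x = l := le_antisymm hx.2 (not_lt.1 h1)
    subst this
    field_simp
  · exfalso; exact h2 (lt_of_le_of_lt hx.2 (by linarith))

lemma lam_eq_mid {l x : ℝ} (hl : l ∈ Ioo (0:ℝ) (1/4)) (hx : x ∈ Icc l (1 - 2*l)) :
    lam l x = (l * (1 - 2*l)^2) / x := by
  obtain ⟨hl0, hl4⟩ := hl
  unfold lam
  split_ifs with h1 h2
  · exact absurd hx.1 (not_le.2 h1)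
  · rfl
  · have : x = 1 - 2*l := le_antisymm hx.2 (not_lt.1 h2)
    subst this
    have : (1:ℝ) - 2*l ≠ 0 := by linarith
    field_simp
    ring

lemma lam_eq_right {l x : ℝ} (hl : l ∈ Ioo (0:ℝ) (1/4)) (hx : x ∈ Icc (1 - 2*l) 1) :
    lam l x = x * (1 - x) / 2 := by
  obtain ⟨hl0, hl4⟩ := hl
  unfold lam
  split_ifs with h1 h2
  · exfalso; have := hx.1; linarith
  · exfalso; have := hx.1; linarith
  · rfl

lemma contOn_union {f : ℝ → ℝ} {s t : Set ℝ} (hs : IsClosed s) (ht : IsClosed t)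
    (hfs : ContinuousOn f s) (hft : ContinuousOn f t) : ContinuousOn f (s ∪ t) := by
  intro x _
  have Hs : ContinuousWithinAt f s x := by
    by_cases h : x ∈ s
    · exact hfs x h
    · exact continuousWithinAt_of_notMem_closure (by rwa [hs.closure_eq])
  have Ht : ContinuousWithinAt f t x := by
    by_cases h : x ∈ t
    · exact hft x h
    · exact continuousWithinAt_of_notMem_closure (by rwa [ht.closure_eq])
  exact Hs.union Ht

lemma lam_cont {l : ℝ} (hl : l ∈ Ioo (0:ℝ) (1/4)) : ContinuousOn (lam l) (Icc (0:ℝ) 1) := by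
  obtain ⟨hl0, hl4⟩ := hl
  have c1 : ContinuousOn (lam l) (Icc (0:ℝ) l) :=
    (Continuous.continuousOn (by continuity)).congr (fun x hx => lam_eq_left ⟨hl0, hl4⟩ hx)
  have c2 : ContinuousOn (lam l) (Icc l (1 - 2*l)) := by
    refine (ContinuousOn.div continuousOn_const continuousOn_id ?_).congr
      (fun x hx => lam_eq_mid ⟨hl0, hl4⟩ hx)
    exact fun x hx => ne_of_gt (lt_of_lt_of_le hl0 hx.1)
  have c3 : ContinuousOn (lam l) (Icc (1 - 2*l) 1) :=
    (Continuous.continuousOn (by continuity)).congr (fun x hx => lam_eq_right ⟨hl0, hl4⟩ hx)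
  have e1 : Icc (0:ℝ) l ∪ Icc l (1 - 2*l) = Icc (0:ℝ) (1 - 2*l) :=
    Icc_union_Icc_eq_Icc hl0.le (by linarith)
  have e2 : Icc (0:ℝ) (1 - 2*l) ∪ Icc (1 - 2*l) 1 = Icc (0:ℝ) 1 :=
    Icc_union_Icc_eq_Icc (by linarith) (by linarith)
  rw [← e2, ← e1]
  exact contOn_union (isClosed_Icc.union isClosed_Icc) isClosed_Icc
    (contOn_union isClosed_Icc isClosed_Icc c1 c2) c3

lemma lam_mem {l x : ℝ} (hl : l ∈ Ioo (0:ℝ) (1/4)) (hx : x ∈ Icc (0:ℝ) 1) :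
    lam l x ∈ Icc (0:ℝ) 1 := by
  obtain ⟨hl0, hl4⟩ := hl
  obtain ⟨hx0, hx1⟩ := hx
  unfold lam
  split_ifs with h1 h2
  · constructor
    · positivity
    · nlinarith
  · have hxpos : 0 < x := lt_of_lt_of_le hl0 (not_lt.1 h1)
    constructor
    · apply div_nonneg _ hxpos.le
      nlinarith
    · rw [div_le_one hxpos]
      have h1' := not_lt.1 h1
      nlinarith [sq_nonneg (1 - 2*l), mul_le_mul_of_nonneg_left (show (1-2*l)^2 ≤ 1 by nlinarith) hl0.le]
  · constructor <;> nlinarith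

lemma touch_f {l a : ℝ} (hl : l ∈ Ioo (0:ℝ) (1/4)) (ha : a ∈ Icc (0:ℝ) 1) :
    ∃ y z, y ∈ Icc (0:ℝ) 1 ∧ z ∈ Icc (0:ℝ) 1 ∧ y * z = lam l a ∧ (a, y, z) ∈ Mset l := by
  obtain ⟨hl0, hl4⟩ := hl
  rcases lt_or_ge a l with h1 | h1
  · refine ⟨1 - 2*a, 1 - 2*a, ⟨by linarith [ha.1], by linarith [ha.1]⟩,
      ⟨by linarith [ha.1], by linarith [ha.1]⟩, ?_, Or.inl ⟨a, ha.1, h1.le, Or.inl rfl⟩⟩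
    rw [lam_eq_left ⟨hl0, hl4⟩ ⟨ha.1, h1.le⟩]; ring
  · rcases lt_or_ge a (1 - 2*l) with h2 | h2
    · set y := Real.sqrt (l * (1 - 2*l)^2 / a) with hy
      have ha0 : 0 < a := lt_of_lt_of_le hl0 h1
      have hv0 : 0 ≤ l * (1 - 2*l)^2 / a := by positivity
      have hyy : y * y = l * (1 - 2*l)^2 / a := Real.mul_self_sqrt hv0
      have hyl : l ≤ y := by
        have hla : l * a ≤ (1 - 2*l)^2 := by nlinarith
        have h' : l^2 ≤ l * (1 - 2*l)^2 / a := by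
          rw [le_div_iff₀ ha0]
          nlinarith [mul_le_mul_of_nonneg_left hla hl0.le]
        calc l = Real.sqrt (l^2) := (Real.sqrt_sq hl0.le).symm
        _ ≤ y := Real.sqrt_le_sqrt h'
      have hyr : y ≤ 1 - 2*l := by
        have h' : l * (1 - 2*l)^2 / a ≤ (1 - 2*l)^2 := by
          rw [div_le_iff₀ ha0]
          nlinarith [mul_le_mul_of_nonneg_right h1 (sq_nonneg (1 - 2*l))]
        calc y ≤ Real.sqrt ((1 - 2*l)^2) := Real.sqrt_le_sqrt h'
        _ = 1 - 2*l := Real.sqrt_sq (by linarith)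
      have hmem : ((a, y, y) : ℝ × ℝ × ℝ) ∈ Mset l :=
        Or.inr ⟨h1, h2.le, hyl, hyr, hyl, hyr, by
          show a * y * y = _
          rw [mul_assoc, hyy]; field_simp⟩
      exact ⟨y, y, ⟨le_trans hl0.le hyl, by linarith⟩, ⟨le_trans hl0.le hyl, by linarith⟩,
        by rw [lam_eq_mid ⟨hl0, hl4⟩ ⟨h1, h2.le⟩, hyy], hmem⟩
    · refine ⟨a, (1 - a)/2, ha, ⟨by linarith [ha.2], by linarith [ha.1]⟩, ?_, ?_⟩
      · rw [lam_eq_right ⟨hl0, hl4⟩ ⟨h2, ha.2⟩]; ring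
      · refine Or.inl ⟨(1 - a)/2, by linarith [ha.2], by linarith, Or.inr (Or.inr ?_)⟩
        rw [show 1 - 2*((1-a)/2) = a from by ring]

lemma touch_g {l a : ℝ} (hl : l ∈ Ioo (0:ℝ) (1/4)) (ha : a ∈ Icc (0:ℝ) 1) :
    ∃ x z, x ∈ Icc (0:ℝ) 1 ∧ z ∈ Icc (0:ℝ) 1 ∧ x * z = lam l a ∧ (x, a, z) ∈ Mset l := by
  obtain ⟨hl0, hl4⟩ := hl
  rcases lt_or_ge a l with h1 | h1
  · refine ⟨1 - 2*a, 1 - 2*a, ⟨by linarith [ha.1], by linarith [ha.1]⟩,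
      ⟨by linarith [ha.1], by linarith [ha.1]⟩, ?_, Or.inl ⟨a, ha.1, h1.le, Or.inr (Or.inl rfl)⟩⟩
    rw [lam_eq_left ⟨hl0, hl4⟩ ⟨ha.1, h1.le⟩]; ring
  · rcases lt_or_ge a (1 - 2*l) with h2 | h2
    · set y := Real.sqrt (l * (1 - 2*l)^2 / a) with hy
      have ha0 : 0 < a := lt_of_lt_of_le hl0 h1
      have hv0 : 0 ≤ l * (1 - 2*l)^2 / a := by positivity
      have hyy : y * y = l * (1 - 2*l)^2 / a := Real.mul_self_sqrt hv0
      have hyl : l ≤ y := by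
        have hla : l * a ≤ (1 - 2*l)^2 := by nlinarith
        have h' : l^2 ≤ l * (1 - 2*l)^2 / a := by
          rw [le_div_iff₀ ha0]
          nlinarith [mul_le_mul_of_nonneg_left hla hl0.le]
        calc l = Real.sqrt (l^2) := (Real.sqrt_sq hl0.le).symm
        _ ≤ y := Real.sqrt_le_sqrt h'
      have hyr : y ≤ 1 - 2*l := by
        have h' : l * (1 - 2*l)^2 / a ≤ (1 - 2*l)^2 := by
          rw [div_le_iff₀ ha0]
          nlinarith [mul_le_mul_of_nonneg_right h1 (sq_nonneg (1 - 2*l))]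
        calc y ≤ Real.sqrt ((1 - 2*l)^2) := Real.sqrt_le_sqrt h'
        _ = 1 - 2*l := Real.sqrt_sq (by linarith)
      have hmem : ((y, a, y) : ℝ × ℝ × ℝ) ∈ Mset l :=
        Or.inr ⟨hyl, hyr, h1, h2.le, hyl, hyr, by
          show y * a * y = _
          rw [show y * a * y = a * (y * y) by ring, hyy]; field_simp⟩
      exact ⟨y, y, ⟨le_trans hl0.le hyl, by linarith⟩, ⟨le_trans hl0.le hyl, by linarith⟩,
        by rw [lam_eq_mid ⟨hl0, hl4⟩ ⟨h1, h2.le⟩, hyy], hmem⟩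
    · refine ⟨(1 - a)/2, a, ⟨by linarith [ha.2], by linarith [ha.1]⟩, ha, ?_, ?_⟩
      · rw [lam_eq_right ⟨hl0, hl4⟩ ⟨h2, ha.2⟩]; ring
      · refine Or.inl ⟨(1 - a)/2, by linarith [ha.2], by linarith, Or.inl ?_⟩
        rw [show 1 - 2*((1-a)/2) = a from by ring]

lemma touch_h {l a : ℝ} (hl : l ∈ Ioo (0:ℝ) (1/4)) (ha : a ∈ Icc (0:ℝ) 1) :
    ∃ x y, x ∈ Icc (0:ℝ) 1 ∧ y ∈ Icc (0:ℝ) 1 ∧ x * y = lam l a ∧ (x, y, a) ∈ Mset l := by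
  obtain ⟨hl0, hl4⟩ := hl
  rcases lt_or_ge a l with h1 | h1
  · refine ⟨1 - 2*a, 1 - 2*a, ⟨by linarith [ha.1], by linarith [ha.1]⟩,
      ⟨by linarith [ha.1], by linarith [ha.1]⟩, ?_,
      Or.inl ⟨a, ha.1, h1.le, Or.inr (Or.inr rfl)⟩⟩
    rw [lam_eq_left ⟨hl0, hl4⟩ ⟨ha.1, h1.le⟩]; ring
  · rcases lt_or_ge a (1 - 2*l) with h2 | h2
    · set y := Real.sqrt (l * (1 - 2*l)^2 / a) with hy
      have ha0 : 0 < a := lt_of_lt_of_le hl0 h1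
      have hv0 : 0 ≤ l * (1 - 2*l)^2 / a := by positivity
      have hyy : y * y = l * (1 - 2*l)^2 / a := Real.mul_self_sqrt hv0
      have hyl : l ≤ y := by
        have hla : l * a ≤ (1 - 2*l)^2 := by nlinarith
        have h' : l^2 ≤ l * (1 - 2*l)^2 / a := by
          rw [le_div_iff₀ ha0]
          nlinarith [mul_le_mul_of_nonneg_left hla hl0.le]
        calc l = Real.sqrt (l^2) := (Real.sqrt_sq hl0.le).symm
        _ ≤ y := Real.sqrt_le_sqrt h'
      have hyr : y ≤ 1 - 2*l := by
        have h' : l * (1 - 2*l)^2 / a ≤ (1 - 2*l)^2 := by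
          rw [div_le_iff₀ ha0]
          nlinarith [mul_le_mul_of_nonneg_right h1 (sq_nonneg (1 - 2*l))]
        calc y ≤ Real.sqrt ((1 - 2*l)^2) := Real.sqrt_le_sqrt h'
        _ = 1 - 2*l := Real.sqrt_sq (by linarith)
      have hmem : ((y, y, a) : ℝ × ℝ × ℝ) ∈ Mset l :=
        Or.inr ⟨hyl, hyr, hyl, hyr, h1, h2.le, by
          show y * y * a = _
          rw [show y * y * a = a * (y * y) by ring, hyy]; field_simp⟩
      exact ⟨y, y, ⟨le_trans hl0.le hyl, by linarith⟩, ⟨le_trans hl0.le hyl, by linarith⟩,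
        by rw [lam_eq_mid ⟨hl0, hl4⟩ ⟨h1, h2.le⟩, hyy], hmem⟩
    · refine ⟨(1 - a)/2, a, ⟨by linarith [ha.2], by linarith [ha.1]⟩, ha, ?_, ?_⟩
      · rw [lam_eq_right ⟨hl0, hl4⟩ ⟨h2, ha.2⟩]; ring
      · refine Or.inl ⟨(1 - a)/2, by linarith [ha.2], by linarith, Or.inl ?_⟩
        rw [show 1 - 2*((1-a)/2) = a from by ring]



-- Envelope lemma
lemma envelope (C C' : ℝ → ℝ)
    (hC : ∀ t ∈ Icc (0:ℝ) 1, HasDerivWithinAt C (C' t) (Icc (0:ℝ) 1) t)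
    (hC' : ContinuousOn C' (Icc (0:ℝ) 1))
    (μ : ℝ → ℝ) (hμc : ContinuousOn μ (Icc (0:ℝ) 1))
    (hμ : ∀ a ∈ Icc (0:ℝ) 1, μ a ∈ Icc (0:ℝ) 1)
    (u : ℝ → ℝ)
    (key : ∀ a ∈ Icc (0:ℝ) 1, ∀ b ∈ Icc (0:ℝ) 1,
      u b - u a ≤ C (b * μ a) - C (a * μ a))
    (x : ℝ) (hx : x ∈ Icc (0:ℝ) 1) :
    HasDerivWithinAt u (μ x * C' (x * μ x)) (Icc (0:ℝ) 1) x := by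
  have hmul : ∀ a ∈ Icc (0:ℝ) 1, ∀ b ∈ Icc (0:ℝ) 1, a * b ∈ Icc (0:ℝ) 1 := by
    rintro a ⟨ha0, ha1⟩ b ⟨hb0, hb1⟩
    exact ⟨mul_nonneg ha0 hb0, by nlinarith⟩
  have hCc : ContinuousOn C (Icc (0:ℝ) 1) := fun t ht => (hC t ht).continuousWithinAt
  -- derivative of t ↦ C (t * m)
  have hphi : ∀ m ∈ Icc (0:ℝ) 1, ∀ t ∈ Icc (0:ℝ) 1,
      HasDerivWithinAt (fun s => C (s * m)) (μ x * C' (t * m)) (Icc (0:ℝ) 1) t → True := fun _ _ _ _ _ => trivial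
  have hphi' : ∀ m ∈ Icc (0:ℝ) 1, ∀ t ∈ Icc (0:ℝ) 1,
      HasDerivWithinAt (fun s => C (s * m)) (m * C' (t * m)) (Icc (0:ℝ) 1) t := by
    intro m hm t ht
    have h1 : HasDerivWithinAt (fun s : ℝ => s * m) ((1:ℝ) * m) (Icc (0:ℝ) 1) t :=
      (hasDerivWithinAt_id t _).mul_const m
    have h2 := hC (t * m) (hmul t ht m hm)
    have h3 := h2.comp t h1 (fun s hs => hmul s hs m hm)
    simpa [mul_comm, Function.comp_def] using h3
  rw [hasDerivWithinAt_iff_tendsto_slope]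
  set d : ℝ := μ x * C' (x * μ x) with hd
  set A : ℝ → ℝ := slope (fun t => C (t * μ x)) x with hA
  set B : ℝ → ℝ := fun b => (C (b * μ b) - C (x * μ b)) / (b - x) with hB
  have hAt : Tendsto A (𝓝[Icc (0:ℝ) 1 \ {x}] x) (𝓝 d) := by
    have := hphi' (μ x) (hμ x hx) x hx
    rwa [hasDerivWithinAt_iff_tendsto_slope] at this
  have hBt : Tendsto B (𝓝[Icc (0:ℝ) 1 \ {x}] x) (𝓝 d) := by
    rw [Metric.tendsto_nhdsWithin_nhds]
    intro ε hε
    -- continuity of K (m, ξ) = m * C' (ξ * m) at (μ x, x)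
    have hK : ContinuousWithinAt (fun p : ℝ × ℝ => p.1 * C' (p.2 * p.1))
        (Icc (0:ℝ) 1 ×ˢ Icc (0:ℝ) 1) (μ x, x) := by
      apply ContinuousWithinAt.mul
      · exact continuous_fst.continuousWithinAt
      · exact (hC'.comp (continuous_snd.mul continuous_fst).continuousOn
          (fun p hp => hmul p.2 hp.2 p.1 hp.1)) (μ x, x) ⟨hμ x hx, hx⟩
    rw [Metric.continuousWithinAt_iff] at hK
    obtain ⟨δ₁, hδ₁, hKδ⟩ := hK ε hε
    have hμx := hμc x hx
    rw [Metric.continuousWithinAt_iff] at hμx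
    obtain ⟨δ₂, hδ₂, hμδ⟩ := hμx δ₁ hδ₁
    refine ⟨min δ₁ δ₂, lt_min hδ₁ hδ₂, ?_⟩
    rintro b ⟨hb, hbx⟩ hdist
    have hbx' : b ≠ x := by simpa using hbx
    have hd1 : dist b x < δ₁ := lt_of_lt_of_le hdist (min_le_left _ _)
    have hd2 : dist b x < δ₂ := lt_of_lt_of_le hdist (min_le_right _ _)
    have hμb := hμ b hb
    have hcontφ : ∀ p q : ℝ, 0 ≤ p → q ≤ 1 → ContinuousOn (fun t => C (t * μ b)) (Icc p q) := by
      intro p q hp hq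
      apply hCc.comp ((continuous_id.mul continuous_const).continuousOn)
      intro t ht
      exact hmul t ⟨le_trans hp ht.1, le_trans ht.2 hq⟩ (μ b) hμb
    have hderφ : ∀ t ∈ Ioo (0:ℝ) 1, HasDerivAt (fun s => C (s * μ b)) (μ b * C' (t * μ b)) t := by
      intro t ht
      exact (hphi' (μ b) hμb t (Ioo_subset_Icc_self ht)).hasDerivAt
        (Icc_mem_nhds ht.1 ht.2)
    have hfin : ∀ ξ : ℝ, ξ ∈ Icc (0:ℝ) 1 → dist ξ x < δ₁ →
        dist (μ b * C' (ξ * μ b)) d < ε := by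
      intro ξ hξ hξx
      have hmem : ((μ b, ξ) : ℝ × ℝ) ∈ Icc (0:ℝ) 1 ×ˢ Icc (0:ℝ) 1 := ⟨hμb, hξ⟩
      have hdd : dist ((μ b, ξ) : ℝ × ℝ) ((μ x, x) : ℝ × ℝ) < δ₁ := by
        rw [Prod.dist_eq]
        exact max_lt (hμδ hb hd2) hξx
      simpa using hKδ hmem hdd
    rcases lt_or_gt_of_ne hbx' with hlt | hgt
    · -- b < x
      obtain ⟨ξ, hξ, hsl⟩ := exists_hasDerivAt_eq_slope (fun s => C (s * μ b))
        (fun t => μ b * C' (t * μ b)) hlt (hcontφ b x hb.1 hx.2)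
        (fun t ht => hderφ t ⟨lt_of_le_of_lt hb.1 ht.1, lt_of_lt_of_le ht.2 hx.2⟩)
      have hBb : B b = μ b * C' (ξ * μ b) := by
        rw [hsl, hB]
        have : b - x ≠ 0 := sub_ne_zero.2 hbx'
        have h2 : x - b ≠ 0 := sub_ne_zero.2 (ne_of_gt hlt)
        field_simp
        ring
      rw [hBb]
      exact hfin ξ ⟨le_trans hb.1 (le_of_lt hξ.1), le_trans (le_of_lt hξ.2) hx.2⟩
        (by rw [Real.dist_eq]; rw [Real.dist_eq] at hd1
            rw [abs_sub_comm] at hd1 ⊢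
            calc |x - ξ| = x - ξ := abs_of_pos (by linarith [hξ.2])
            _ < x - b := by linarith [hξ.1]
            _ ≤ |x - b| := le_abs_self _
            _ < δ₁ := hd1)
    · -- x < b
      obtain ⟨ξ, hξ, hsl⟩ := exists_hasDerivAt_eq_slope (fun s => C (s * μ b))
        (fun t => μ b * C' (t * μ b)) hgt (hcontφ x b hx.1 hb.2)
        (fun t ht => hderφ t ⟨lt_of_le_of_lt hx.1 ht.1, lt_of_lt_of_le ht.2 hb.2⟩)
      have hBb : B b = μ b * C' (ξ * μ b) := by rw [hsl, hB]
      rw [hBb]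
      exact hfin ξ ⟨le_trans hx.1 (le_of_lt hξ.1), le_trans (le_of_lt hξ.2) hb.2⟩
        (by rw [Real.dist_eq] at hd1 ⊢
            calc |ξ - x| = ξ - x := abs_of_pos (by linarith [hξ.1])
            _ < b - x := by linarith [hξ.2]
            _ ≤ |b - x| := le_abs_self _
            _ < δ₁ := hd1)
  -- squeeze
  have hbound : ∀ b ∈ Icc (0:ℝ) 1 \ {x},
      min (A b) (B b) ≤ slope u x b ∧ slope u x b ≤ max (A b) (B b) := by
    rintro b ⟨hb, hbx⟩
    have hbx' : b ≠ x := by simpa using hbx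
    have k1 := key x hx b hb
    have k2 := key b hb x hx
    rw [slope_def_field, hA, slope_def_field, hB]
    rcases lt_or_gt_of_ne hbx' with hlt | hgt
    · have hneg : b - x < 0 := by linarith
      constructor
      · refine le_trans (min_le_left _ _) ?_
        rw [div_le_div_right_of_neg hneg]
        linarith
      · refine le_trans ?_ (le_max_right _ _)
        rw [div_le_div_right_of_neg hneg]
        linarith
    · have hpos : (0:ℝ) < b - x := by linarith
      constructor
      · refine le_trans (min_le_right _ _) ?_
        rw [div_le_div_iff_of_pos_right hpos]
        linarith
      · refine le_trans ?_ (le_max_left _ _)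
        rw [div_le_div_iff_of_pos_right hpos]
        linarith
  have hmin : Tendsto (fun b => min (A b) (B b)) (𝓝[Icc (0:ℝ) 1 \ {x}] x) (𝓝 d) := by
    simpa using hAt.min hBt
  have hmax : Tendsto (fun b => max (A b) (B b)) (𝓝[Icc (0:ℝ) 1 \ {x}] x) (𝓝 d) := by
    simpa using hAt.max hBt
  exact tendsto_of_tendsto_of_tendsto_of_le_of_le' hmin hmax
    (eventually_of_mem self_mem_nhdsWithin (fun b hb => (hbound b hb).1))
    (eventually_of_mem self_mem_nhdsWithin (fun b hb => (hbound b hb).2))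


/-- If `f, g, h : [0,1] → ℝ` satisfy `f(x) + g(y) + h(z) ≤ C(xyz)` on `[0,1]³` with equality
on `M`, then `f, g, h` are continuously differentiable with
`f'(x) = λ(x)·C'(x·λ(x))` (and similarly for `g` and `h`). -/
theorem dual_potentials_differentiable (C C' : ℝ → ℝ)
    (hC : ∀ t ∈ Set.Icc (0 : ℝ) 1, HasDerivWithinAt C (C' t) (Set.Icc (0 : ℝ) 1) t)
    (hC' : ContinuousOn C' (Set.Icc (0 : ℝ) 1))
    (l : ℝ) (hl : l ∈ Set.Ioo (0 : ℝ) (1/4))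
    (f g h : ℝ → ℝ)
    (hle : ∀ x ∈ Set.Icc (0 : ℝ) 1, ∀ y ∈ Set.Icc (0 : ℝ) 1, ∀ z ∈ Set.Icc (0 : ℝ) 1,
      f x + g y + h z ≤ C (x * y * z))
    (heq : ∀ p ∈ Mset l, f p.1 + g p.2.1 + h p.2.2 = C (p.1 * p.2.1 * p.2.2)) :
    (∀ x ∈ Set.Icc (0 : ℝ) 1,
        HasDerivWithinAt f (lam l x * C' (x * lam l x)) (Set.Icc (0 : ℝ) 1) x ∧
        HasDerivWithinAt g (lam l x * C' (x * lam l x)) (Set.Icc (0 : ℝ) 1) x ∧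
        HasDerivWithinAt h (lam l x * C' (x * lam l x)) (Set.Icc (0 : ℝ) 1) x) ∧
      ContinuousOn (fun x => lam l x * C' (x * lam l x)) (Set.Icc (0 : ℝ) 1) := by
  obtain ⟨hl0, hl4⟩ := hl
  have hlamc := lam_cont ⟨hl0, hl4⟩
  have hlmem : ∀ a ∈ Set.Icc (0:ℝ) 1, lam l a ∈ Set.Icc (0:ℝ) 1 :=
    fun a ha => lam_mem ⟨hl0, hl4⟩ ha
  have keyf : ∀ a ∈ Set.Icc (0:ℝ) 1, ∀ b ∈ Set.Icc (0:ℝ) 1,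
      f b - f a ≤ C (b * lam l a) - C (a * lam l a) := by
    intro a ha b hb
    obtain ⟨y, z, hy, hz, hyz, hm⟩ := touch_f ⟨hl0, hl4⟩ ha
    have e1 := heq _ hm
    have e2 := hle b hb y hy z hz
    simp only at e1
    rw [show a * y * z = a * lam l a from by rw [mul_assoc, hyz]] at e1
    rw [show b * y * z = b * lam l a from by rw [mul_assoc, hyz]] at e2
    linarith
  have keyg : ∀ a ∈ Set.Icc (0:ℝ) 1, ∀ b ∈ Set.Icc (0:ℝ) 1,
      g b - g a ≤ C (b * lam l a) - C (a * lam l a) := by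
    intro a ha b hb
    obtain ⟨xx, z, hxx, hz, hxz, hm⟩ := touch_g ⟨hl0, hl4⟩ ha
    have e1 := heq _ hm
    have e2 := hle xx hxx b hb z hz
    simp only at e1
    rw [show xx * a * z = a * lam l a from by rw [show xx * a * z = a * (xx * z) from by ring, hxz]] at e1
    rw [show xx * b * z = b * lam l a from by rw [show xx * b * z = b * (xx * z) from by ring, hxz]] at e2
    linarith
  have keyh : ∀ a ∈ Set.Icc (0:ℝ) 1, ∀ b ∈ Set.Icc (0:ℝ) 1,
      h b - h a ≤ C (b * lam l a) - C (a * lam l a) := by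
    intro a ha b hb
    obtain ⟨xx, y, hxx, hy, hxy, hm⟩ := touch_h ⟨hl0, hl4⟩ ha
    have e1 := heq _ hm
    have e2 := hle xx hxx y hy b hb
    simp only at e1
    rw [show xx * y * a = a * lam l a from by rw [show xx * y * a = a * (xx * y) from by ring, hxy]] at e1
    rw [show xx * y * b = b * lam l a from by rw [show xx * y * b = b * (xx * y) from by ring, hxy]] at e2
    linarith
  constructor
  · intro x hx
    exact ⟨envelope C C' hC hC' (lam l) hlamc hlmem f keyf x hx,
      envelope C C' hC hC' (lam l) hlamc hlmem g keyg x hx,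
      envelope C C' hC hC' (lam l) hlamc hlmem h keyh x hx⟩
  · refine ContinuousOn.mul hlamc (hC'.comp (continuousOn_id.mul hlamc) ?_)
    intro x hx
    obtain ⟨h0, h1⟩ := hlmem x hx
    refine ⟨mul_nonneg hx.1 h0, ?_⟩
    show x * lam l x ≤ 1
    nlinarith [hx.1, hx.2]
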